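/- Counterexample ingredient to the Strong Maximum Principle: let p > 2, β > max{2, p/(p−2)}, 0 < γ ≤ β, k > 0. Define f(x,t) = k·x^β(1−x^γ) − (p−1)β^{p−1}(β−1)·t^{p−1}·x^{(β−1)(p−2)+β−2}·|1 − ((β+γ)/β)x^γ|^{p−2}·(1 − ((β+γ)(β+γ−1))/(β(β−1))·x^γ). Then there exists t₀ > 0 such that f(x,t) > 0 for all x ∈ (0,1) and all t ∈ (0,t₀). -/

import Mathlib

open Real Set

set_option maxHeartbeats 1000000 in
theorem stmt8 (p β γ k : ℝ) (hp : 2 < p) (hβ : max 2 (p / (p - 2)) < β)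
    (hγ1 : 0 < γ) (hγ2 : γ ≤ β) (hk : 0 < k)
    (f : ℝ → ℝ → ℝ)
    (hf : ∀ x t : ℝ, f x t =
      k * x ^ β * (1 - x ^ γ) -
        (p - 1) * β ^ (p - 1) * (β - 1) * t ^ (p - 1) *
          x ^ ((β - 1) * (p - 2) + β - 2) *
          |1 - ((β + γ) / β) * x ^ γ| ^ (p - 2) *
          (1 - ((β + γ) * (β + γ - 1)) / (β * (β - 1)) * x ^ γ)) :
    ∃ t₀ : ℝ, 0 < t₀ ∧ ∀ x ∈ Set.Ioo (0 : ℝ) 1, ∀ t ∈ Set.Ioo (0 : ℝ) t₀,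
      0 < f x t := by
  have hp2 : (0:ℝ) < p - 2 := by linarith
  have hβ2 : (2:ℝ) < β := lt_of_le_of_lt (le_max_left _ _) hβ
  have hβp : p / (p - 2) < β := lt_of_le_of_lt (le_max_right _ _) hβ
  have hβ0 : (0:ℝ) < β := by linarith
  have hβ1 : (0:ℝ) < β - 1 := by linarith
  have hmβ : β ≤ (β - 1) * (p - 2) + β - 2 := by
    have h := (div_lt_iff₀ hp2).mp hβp
    nlinarith
  set c₁ := (β + γ) / β with hc₁def
  set c₂ := ((β + γ) * (β + γ - 1)) / (β * (β - 1)) with hc₂def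
  have hc₁ : 1 < c₁ := by
    rw [hc₁def, lt_div_iff₀ hβ0]; linarith
  have hc₂ : 1 < c₂ := by
    rw [hc₂def, lt_div_iff₀ (by positivity : (0:ℝ) < β * (β - 1))]; nlinarith
  set C := (p - 1) * β ^ (p - 1) * (β - 1) with hCdef
  have hβrp : (0:ℝ) < β ^ (p - 1) := rpow_pos_of_pos hβ0 _
  have hC : 0 < C := by
    rw [hCdef]; exact mul_pos (mul_pos (by linarith) hβrp) hβ1
  set δ := 1 - 1 / c₂ with hδdef
  have hδ : 0 < δ := by
    have : 1 / c₂ < 1 := by rw [div_lt_one (by linarith)]; exact hc₂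
    rw [hδdef]; linarith
  set E := C * c₁ ^ (p - 2) with hEdef
  have hc₁rp : (0:ℝ) < c₁ ^ (p - 2) := rpow_pos_of_pos (by linarith) _
  have hE : 0 < E := mul_pos hC hc₁rp
  have hbase : (0:ℝ) < k * δ / (2 * E) := by positivity
  refine ⟨(k * δ / (2 * E)) ^ (p - 1)⁻¹, rpow_pos_of_pos hbase _, ?_⟩
  intro x hx t ht
  obtain ⟨hx0, hx1⟩ := hx
  obtain ⟨ht0, ht1⟩ := ht
  have hg : x ^ γ < 1 := rpow_lt_one hx0.le hx1 hγ1
  have hg0 : (0:ℝ) < x ^ γ := rpow_pos_of_pos hx0 _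
  have hX : (0:ℝ) < x ^ β := rpow_pos_of_pos hx0 _
  have hxm : (0:ℝ) < x ^ ((β - 1) * (p - 2) + β - 2) := rpow_pos_of_pos hx0 _
  have hA : 0 < k * x ^ β * (1 - x ^ γ) := by
    apply mul_pos (mul_pos hk hX); linarith
  have htp : (0:ℝ) ≤ t ^ (p - 1) := rpow_nonneg ht0.le _
  have habsp : (0:ℝ) ≤ |1 - c₁ * x ^ γ| ^ (p - 2) := rpow_nonneg (abs_nonneg _) _
  rw [hf x t]
  by_cases hcase : 1 - c₂ * x ^ γ ≤ 0
  · have hterm : C * t ^ (p - 1) * x ^ ((β - 1) * (p - 2) + β - 2) *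
        |1 - c₁ * x ^ γ| ^ (p - 2) * (1 - c₂ * x ^ γ) ≤ 0 := by
      apply mul_nonpos_of_nonneg_of_nonpos _ hcase
      exact mul_nonneg (mul_nonneg (mul_nonneg hC.le htp) hxm.le) habsp
    linarith
  · push_neg at hcase
    have hginv : x ^ γ < 1 / c₂ := by
      rw [lt_div_iff₀ (by linarith : (0:ℝ) < c₂)]; linarith
    have hgδ : δ < 1 - x ^ γ := by rw [hδdef]; linarith
    have habs : |1 - c₁ * x ^ γ| ≤ c₁ := by
      refine abs_le.mpr ⟨?_, ?_⟩ <;> nlinarith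
    have h2 : |1 - c₁ * x ^ γ| ^ (p - 2) ≤ c₁ ^ (p - 2) :=
      rpow_le_rpow (abs_nonneg _) habs (by linarith)
    have h1 : x ^ ((β - 1) * (p - 2) + β - 2) ≤ x ^ β :=
      rpow_le_rpow_of_exponent_ge hx0 hx1.le hmβ
    have ht2 : t ^ (p - 1) < k * δ / (2 * E) := by
      have h3 : t ^ (p - 1) < ((k * δ / (2 * E)) ^ (p - 1)⁻¹) ^ (p - 1) :=
        rpow_lt_rpow ht0.le ht1 (by linarith)
      have hid : ((k * δ / (2 * E)) ^ (p - 1)⁻¹) ^ (p - 1) = k * δ / (2 * E) := by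
        rw [← Real.rpow_mul hbase.le, inv_mul_cancel₀ (by linarith : p - 1 ≠ 0), rpow_one]
      rwa [hid] at h3
    have hterm : C * t ^ (p - 1) * x ^ ((β - 1) * (p - 2) + β - 2) *
        |1 - c₁ * x ^ γ| ^ (p - 2) * (1 - c₂ * x ^ γ) ≤
        C * t ^ (p - 1) * x ^ β * c₁ ^ (p - 2) * 1 := by
      have h0 : (0:ℝ) ≤ C * t ^ (p - 1) := mul_nonneg hC.le htp
      have s1 : C * t ^ (p - 1) * x ^ ((β - 1) * (p - 2) + β - 2) ≤
          C * t ^ (p - 1) * x ^ β := mul_le_mul_of_nonneg_left h1 h0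
      have s2 : C * t ^ (p - 1) * x ^ ((β - 1) * (p - 2) + β - 2) *
          |1 - c₁ * x ^ γ| ^ (p - 2) ≤ C * t ^ (p - 1) * x ^ β * c₁ ^ (p - 2) :=
        mul_le_mul s1 h2 habsp (mul_nonneg h0 hX.le)
      exact mul_le_mul s2 (by nlinarith) hcase.le
        (mul_nonneg (mul_nonneg h0 hX.le) hc₁rp.le)
    have hEt : E * t ^ (p - 1) < k * δ / 2 := by
      have := mul_lt_mul_of_pos_left ht2 hE
      have heq : E * (k * δ / (2 * E)) = k * δ / 2 := by
        field_simp
      linarith [heq ▸ this]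
    have h5 : C * t ^ (p - 1) * x ^ β * c₁ ^ (p - 2) * 1 < k * x ^ β * (1 - x ^ γ) := by
      have h6 : E * t ^ (p - 1) < k * (1 - x ^ γ) := by nlinarith
      have h7 : E * t ^ (p - 1) * x ^ β < k * (1 - x ^ γ) * x ^ β :=
        mul_lt_mul_of_pos_right h6 hX
      calc C * t ^ (p - 1) * x ^ β * c₁ ^ (p - 2) * 1
          = E * t ^ (p - 1) * x ^ β := by rw [hEdef]; ring
        _ < k * (1 - x ^ γ) * x ^ β := h7
        _ = k * x ^ β * (1 - x ^ γ) := by ring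
    linarith
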